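/- Fix λ ∈ Λ and let M_λ = (ℝⁿ ∖ {0}) / ⟨φ_λ⟩ be the orbit space of the ℤ-action k • x = φ_λ^k x, with the quotient topology and its Borel σ-algebra. Since φ^t commutes with φ_λ, each φ^t descends to a homeomorphism φ̄^t : M_λ → M_λ. Then there is no finite Borel measure μ on M_λ such that μ(V) > 0 for every nonempty open set V ⊆ M_λ and μ((φ̄^t)^{−1}(A)) = μ(A) for every Borel set A and every t ∈ ℝ. -/

import Mathlib

/-- The diagonal entries of the linear map `φ_λ`, `λ = (α,β)`:
`(e^{-α+2β}, e^{3α}, e^{2α-β}, e^{3β}, e^{α+β}, …, e^{α+β})` (0-based position `j`). -/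
noncomputable def phiDiag (α β : ℝ) (j : ℕ) : ℝ :=
  if j = 0 then Real.exp (-α + 2 * β)
  else if j = 1 then Real.exp (3 * α)
  else if j = 2 then Real.exp (2 * α - β)
  else if j = 3 then Real.exp (3 * β)
  else Real.exp (α + β)

/-- The diagonal entries of the flow `φ^t`:
`(e^{-3t/2}, e^{-3t/2}, 1, e^{-3t}, e^{-3t/2}, …, e^{-3t/2})` (0-based position `j`). -/
noncomputable def flowDiag (t : ℝ) (j : ℕ) : ℝ :=
  if j = 2 then 1
  else if j = 3 then Real.exp (-(3 * t))
  else Real.exp (-(3 * t) / 2)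

/-- The orbit equivalence relation of the `ℤ`-action `k • x = φ_λ^k x` on `ℝⁿ ∖ {0}`:
`x ∼ y` iff `y = φ_λ^k x` for some `k ∈ ℤ`. The orbit space `M_λ` is `Quot` of
this relation, with the quotient topology. -/
noncomputable def phiOrbitRel (n : ℕ) (α β : ℝ) :
    {x : Fin n → ℝ // x ≠ 0} → {x : Fin n → ℝ // x ≠ 0} → Prop :=
  fun x y => ∃ k : ℤ, (fun j : Fin n => phiDiag α β (j : ℕ) ^ k * x.1 j) = y.1

lemma phiDiag_pos (α β : ℝ) (j : ℕ) : 0 < phiDiag α β j := by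
  unfold phiDiag; split_ifs <;> exact Real.exp_pos _

lemma flowDiag_pos (t : ℝ) (j : ℕ) : 0 < flowDiag t j := by
  unfold flowDiag; split_ifs <;> positivity

lemma phiOrbit_equiv (n : ℕ) (α β : ℝ) : Equivalence (phiOrbitRel n α β) := by
  constructor
  · intro x; exact ⟨0, by funext j; simp⟩
  · rintro x y ⟨k, hk⟩
    refine ⟨-k, funext fun j => ?_⟩
    have h := congrFun hk j
    rw [← h, zpow_neg, ← mul_assoc,
      inv_mul_cancel₀ (zpow_ne_zero k (phiDiag_pos α β j).ne'), one_mul]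
  · rintro x y z ⟨k, hk⟩ ⟨l, hl⟩
    refine ⟨k + l, funext fun j => ?_⟩
    have h := congrFun hk j
    have h' := congrFun hl j
    rw [← h', ← h, zpow_add₀ (phiDiag_pos α β j).ne']
    ring

lemma log_abs_mul_pos {d x : ℝ} (hd : 0 < d) (hx : x ≠ 0) :
    Real.log |d * x| = Real.log d + Real.log |x| := by
  rw [abs_mul, abs_of_pos hd, Real.log_mul hd.ne' (abs_ne_zero.2 hx)]

noncomputable def ellF (α β : ℝ) {n : ℕ} (j1 j3 : Fin n) (v : Fin n → ℝ) : ℝ :=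
  β * Real.log |v j1| - α * Real.log |v j3|

lemma ell_invariant {n : ℕ} (α β : ℝ) (j1 j3 : Fin n) (hj1 : (j1:ℕ) = 1) (hj3 : (j3:ℕ) = 3)
    {x y : {x : Fin n → ℝ // x ≠ 0}} (h : phiOrbitRel n α β x y) :
    (y.1 j1 ≠ 0 ↔ x.1 j1 ≠ 0) ∧ (y.1 j3 ≠ 0 ↔ x.1 j3 ≠ 0) ∧
    (x.1 j1 ≠ 0 → x.1 j3 ≠ 0 → ellF α β j1 j3 y.1 = ellF α β j1 j3 x.1) := by
  obtain ⟨k, hk⟩ := h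
  have h1 : phiDiag α β 1 ^ k * x.1 j1 = y.1 j1 := by
    have := congrFun hk j1; rwa [hj1] at this
  have h3 : phiDiag α β 3 ^ k * x.1 j3 = y.1 j3 := by
    have := congrFun hk j3; rwa [hj3] at this
  have hd1 : phiDiag α β 1 = Real.exp (3 * α) := by simp [phiDiag]
  have hd3 : phiDiag α β 3 = Real.exp (3 * β) := by simp [phiDiag]
  have hp1 : (0:ℝ) < phiDiag α β 1 ^ k := zpow_pos (phiDiag_pos α β 1) k
  have hp3 : (0:ℝ) < phiDiag α β 3 ^ k := zpow_pos (phiDiag_pos α β 3) k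
  refine ⟨by rw [← h1]; simp [hp1.ne'], by rw [← h3]; simp [hp3.ne'], fun hx1 hx3 => ?_⟩
  have l1 : Real.log |y.1 j1| = (k : ℝ) * (3 * α) + Real.log |x.1 j1| := by
    rw [← h1, log_abs_mul_pos hp1 hx1, hd1, Real.log_zpow, Real.log_exp]
  have l3 : Real.log |y.1 j3| = (k : ℝ) * (3 * β) + Real.log |x.1 j3| := by
    rw [← h3, log_abs_mul_pos hp3 hx3, hd3, Real.log_zpow, Real.log_exp]
  unfold ellF
  rw [l1, l3]; ring

def orbSet (α β : ℝ) {n : ℕ} (j1 j3 : Fin n) (O : Set ℝ) : Set {x : Fin n → ℝ // x ≠ 0} :=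
  {y | y.1 j1 ≠ 0 ∧ y.1 j3 ≠ 0 ∧ ellF α β j1 j3 y.1 ∈ O}

lemma mem_image_orbSet {n : ℕ} (α β : ℝ) (j1 j3 : Fin n) (hj1 : (j1:ℕ) = 1)
    (hj3 : (j3:ℕ) = 3) (O : Set ℝ) (x : {x : Fin n → ℝ // x ≠ 0}) :
    Quot.mk (phiOrbitRel n α β) x ∈ Quot.mk (phiOrbitRel n α β) '' orbSet α β j1 j3 O ↔
      x ∈ orbSet α β j1 j3 O := by
  constructor
  · rintro ⟨y, hy, hq⟩
    have hrel : phiOrbitRel n α β y x :=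
      ((phiOrbit_equiv n α β).eqvGen_iff).1 (Quot.eq.1 hq)
    obtain ⟨e1, e3, he⟩ := ell_invariant α β j1 j3 hj1 hj3 hrel
    exact ⟨e1.2 hy.1, e3.2 hy.2.1, by rw [he hy.1 hy.2.1]; exact hy.2.2⟩
  · intro h; exact ⟨x, h, rfl⟩

lemma isOpen_image_orbSet {n : ℕ} (α β : ℝ) (j1 j3 : Fin n) (hj1 : (j1:ℕ) = 1)
    (hj3 : (j3:ℕ) = 3) (O : Set ℝ) (hO : IsOpen O) :
    IsOpen (Quot.mk (phiOrbitRel n α β) '' orbSet α β j1 j3 O) := by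
  rw [isOpen_coinduced]
  have hpre : Quot.mk (phiOrbitRel n α β) ⁻¹' (Quot.mk (phiOrbitRel n α β) '' orbSet α β j1 j3 O)
      = orbSet α β j1 j3 O := by
    ext x; exact mem_image_orbSet α β j1 j3 hj1 hj3 O x
  rw [hpre]
  set A : Set (Fin n → ℝ) := {v | v j1 ≠ 0 ∧ v j3 ≠ 0} with hA
  have hAopen : IsOpen A := by
    have : A = ((fun v : Fin n → ℝ => v j1) ⁻¹' {0}ᶜ) ∩ ((fun v : Fin n → ℝ => v j3) ⁻¹' {0}ᶜ) := by
      ext v; simp [hA]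
    rw [this]
    exact (isOpen_compl_singleton.preimage (continuous_apply j1)).inter
      (isOpen_compl_singleton.preimage (continuous_apply j3))
  have c1 : ContinuousOn (fun v : Fin n → ℝ => Real.log |v j1|) A :=
    Real.continuousOn_log.comp ((continuous_abs.comp (continuous_apply j1)).continuousOn)
      (fun v hv => by simp [abs_ne_zero]; exact hv.1)
  have c3 : ContinuousOn (fun v : Fin n → ℝ => Real.log |v j3|) A :=
    Real.continuousOn_log.comp ((continuous_abs.comp (continuous_apply j3)).continuousOn)
      (fun v hv => by simp [abs_ne_zero]; exact hv.2)
  have cEll : ContinuousOn (ellF α β j1 j3) A :=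
    (continuousOn_const.mul c1).sub (continuousOn_const.mul c3)
  have hU : IsOpen (A ∩ ellF α β j1 j3 ⁻¹' O) := cEll.isOpen_inter_preimage hAopen hO
  have : orbSet α β j1 j3 O = Subtype.val ⁻¹' (A ∩ ellF α β j1 j3 ⁻¹' O) := by
    ext y; simp [orbSet, hA, and_assoc]
  rw [this]
  exact hU.preimage continuous_subtype_val

noncomputable def flowMap (t : ℝ) {n : ℕ} (x : {x : Fin n → ℝ // x ≠ 0}) :
    {x : Fin n → ℝ // x ≠ 0} :=
  ⟨fun j => flowDiag t (j : ℕ) * x.1 j, by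
    intro h
    apply x.2
    funext j
    have hj := congrFun h j
    simp only [Pi.zero_apply] at hj ⊢
    rcases mul_eq_zero.1 hj with h' | h'
    · exact absurd h' (flowDiag_pos t j).ne'
    · exact h'⟩

lemma flowMap_rel (t : ℝ) {n : ℕ} (α β : ℝ) {x y : {x : Fin n → ℝ // x ≠ 0}}
    (h : phiOrbitRel n α β x y) : phiOrbitRel n α β (flowMap t x) (flowMap t y) := by
  obtain ⟨k, hk⟩ := h
  refine ⟨k, funext fun j => ?_⟩
  have hj := congrFun hk j
  show phiDiag α β (j : ℕ) ^ k * (flowDiag t (j : ℕ) * x.1 j) = flowDiag t (j : ℕ) * y.1 j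
  rw [← hj]; ring

lemma flowMap_spec {n : ℕ} (α β : ℝ) (j1 j3 : Fin n) (hj1 : (j1:ℕ) = 1) (hj3 : (j3:ℕ) = 3)
    (x : {x : Fin n → ℝ // x ≠ 0}) :
    ((flowMap (-1) x).1 j1 ≠ 0 ↔ x.1 j1 ≠ 0) ∧ ((flowMap (-1) x).1 j3 ≠ 0 ↔ x.1 j3 ≠ 0) ∧
    (x.1 j1 ≠ 0 → x.1 j3 ≠ 0 →
      ellF α β j1 j3 (flowMap (-1) x).1 = ellF α β j1 j3 x.1 + (3 * β / 2 - 3 * α)) := by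
  have hf1 : flowDiag (-1) (j1 : ℕ) = Real.exp (3/2) := by rw [hj1]; norm_num [flowDiag]
  have hf3 : flowDiag (-1) (j3 : ℕ) = Real.exp 3 := by rw [hj3]; norm_num [flowDiag]
  have e1 : (flowMap (-1) x).1 j1 = Real.exp (3/2) * x.1 j1 := by
    show flowDiag (-1) (j1 : ℕ) * x.1 j1 = _; rw [hf1]
  have e3 : (flowMap (-1) x).1 j3 = Real.exp 3 * x.1 j3 := by
    show flowDiag (-1) (j3 : ℕ) * x.1 j3 = _; rw [hf3]
  refine ⟨by rw [e1]; simp [Real.exp_ne_zero], by rw [e3]; simp [Real.exp_ne_zero], fun hx1 hx3 => ?_⟩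
  have l1 : Real.log |(flowMap (-1) x).1 j1| = 3/2 + Real.log |x.1 j1| := by
    rw [e1, log_abs_mul_pos (Real.exp_pos _) hx1, Real.log_exp]
  have l3 : Real.log |(flowMap (-1) x).1 j3| = 3 + Real.log |x.1 j3| := by
    rw [e3, log_abs_mul_pos (Real.exp_pos _) hx3, Real.log_exp]
  unfold ellF
  rw [l1, l3]; ring



open MeasureTheory

/-- Strong essentiality: there is no finite Borel measure on `M_λ = (ℝⁿ∖{0})/⟨φ_λ⟩`
which is positive on nonempty open sets and invariant under every induced
homeomorphism `φ̄^t` (the descent of the flow `φ^t` to the quotient). -/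
theorem no_invariant_finite_measure (n : ℕ) (hn : 4 ≤ n) (α β : ℝ)
    (h1 : α < β) (h2 : β < α / 2) (h3 : α / 2 < 0) :
    ¬ ∃ μ : @MeasureTheory.Measure (Quot (phiOrbitRel n α β))
        (borel (Quot (phiOrbitRel n α β))),
      μ Set.univ < ⊤ ∧
      (∀ V : Set (Quot (phiOrbitRel n α β)), IsOpen V → V.Nonempty → 0 < μ V) ∧
      (∀ t : ℝ, ∀ F : Quot (phiOrbitRel n α β) → Quot (phiOrbitRel n α β),
        (∀ x y : {x : Fin n → ℝ // x ≠ 0},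
          (y.1 = fun j : Fin n => flowDiag t (j : ℕ) * x.1 j) →
            F (Quot.mk _ x) = Quot.mk _ y) →
        ∀ A : Set (Quot (phiOrbitRel n α β)),
          @MeasurableSet _ (borel (Quot (phiOrbitRel n α β))) A →
            μ (F ⁻¹' A) = μ A) := by
  rintro ⟨μ, hfin, hpos, hinv⟩
  have hβ : β < 0 := lt_trans h2 h3
  have hα : α < 0 := by linarith
  set j1 : Fin n := ⟨1, by omega⟩ with hj1def
  set j3 : Fin n := ⟨3, by omega⟩ with hj3def
  have hj1 : (j1 : ℕ) = 1 := rfl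
  have hj3 : (j3 : ℕ) = 3 := rfl
  obtain ⟨c, hcdef⟩ : ∃ c : ℝ, c = 3 * β / 2 - 3 * α := ⟨_, rfl⟩
  have hc : 0 < c := by rw [hcdef]; nlinarith
  -- the three saturated open sets
  set V : Set (Quot (phiOrbitRel n α β)) :=
    Quot.mk (phiOrbitRel n α β) '' orbSet α β j1 j3 (Set.Iio 0) with hVdef
  set V' : Set (Quot (phiOrbitRel n α β)) :=
    Quot.mk (phiOrbitRel n α β) '' orbSet α β j1 j3 (Set.Iio (-c)) with hV'def
  set W : Set (Quot (phiOrbitRel n α β)) :=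
    Quot.mk (phiOrbitRel n α β) '' orbSet α β j1 j3 (Set.Ioo (-c) 0) with hWdef
  have hVopen : IsOpen V := isOpen_image_orbSet α β j1 j3 hj1 hj3 _ isOpen_Iio
  have hWopen : IsOpen W := isOpen_image_orbSet α β j1 j3 hj1 hj3 _ isOpen_Ioo
  have hVmeas : @MeasurableSet _ (borel (Quot (phiOrbitRel n α β))) V :=
    MeasurableSpace.measurableSet_generateFrom hVopen
  have hWmeas : @MeasurableSet _ (borel (Quot (phiOrbitRel n α β))) W :=
    MeasurableSpace.measurableSet_generateFrom hWopen
  -- the descended flow map at time t = -1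
  set F : Quot (phiOrbitRel n α β) → Quot (phiOrbitRel n α β) :=
    Quot.lift (fun x => Quot.mk (phiOrbitRel n α β) (flowMap (-1) x))
      (fun _ _ h => Quot.sound (flowMap_rel (-1) α β h)) with hFdef
  have hFprop : ∀ x y : {x : Fin n → ℝ // x ≠ 0},
      (y.1 = fun j : Fin n => flowDiag (-1) (j : ℕ) * x.1 j) →
        F (Quot.mk _ x) = Quot.mk _ y := by
    intro x y hy
    show Quot.mk (phiOrbitRel n α β) (flowMap (-1) x) = Quot.mk _ y
    exact congrArg _ (Subtype.ext hy.symm)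
  -- preimage of V under F
  have hFpre : F ⁻¹' V = V' := by
    ext q
    induction q using Quot.ind with
    | _ x =>
      have hFx : F (Quot.mk (phiOrbitRel n α β) x) = Quot.mk _ (flowMap (-1) x) := rfl
      simp only [Set.mem_preimage, hFx, hVdef, hV'def]
      rw [mem_image_orbSet α β j1 j3 hj1 hj3 _ (flowMap (-1) x),
        mem_image_orbSet α β j1 j3 hj1 hj3 _ x]
      obtain ⟨e1, e3, he⟩ := flowMap_spec α β j1 j3 hj1 hj3 x
      constructor
      · rintro ⟨a1, a3, ha⟩
        have hx1 := e1.1 a1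
        have hx3 := e3.1 a3
        refine ⟨hx1, hx3, ?_⟩
        simp only [Set.mem_Iio] at ha ⊢
        rw [he hx1 hx3] at ha
        rw [hcdef]
        linarith
      · rintro ⟨a1, a3, ha⟩
        refine ⟨e1.2 a1, e3.2 a3, ?_⟩
        simp only [Set.mem_Iio] at ha ⊢
        rw [he a1 a3]
        rw [hcdef] at ha
        linarith
  -- W is nonempty
  have hβne : β ≠ 0 := hβ.ne
  set w : Fin n → ℝ := fun j => if j = j1 then Real.exp (-c / (2 * β)) else if j = j3 then 1 else 0
    with hwdef
  have hj13 : j3 ≠ j1 := by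
    intro h
    have := congrArg (fun j : Fin n => (j : ℕ)) h
    simp [hj1, hj3] at this
  have hw0 : w ≠ 0 := by
    intro h
    have := congrFun h j3
    simp [hwdef, hj13] at this
  have hww1 : w j1 = Real.exp (-c / (2 * β)) := by simp [hwdef]
  have hww3 : w j3 = 1 := by simp [hwdef, hj13]
  have hwell : ellF α β j1 j3 w = -c / 2 := by
    unfold ellF
    rw [hww1, hww3, abs_of_pos (Real.exp_pos _), Real.log_exp]
    simp only [abs_one, Real.log_one, mul_zero, sub_zero]
    field_simp
  have hWne : W.Nonempty := by
    refine ⟨Quot.mk _ ⟨w, hw0⟩, Set.mem_image_of_mem _ ?_⟩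
    show w j1 ≠ 0 ∧ w j3 ≠ 0 ∧ ellF α β j1 j3 w ∈ Set.Ioo (-c) 0
    refine ⟨by rw [hww1]; exact (Real.exp_pos _).ne', by rw [hww3]; norm_num, ?_⟩
    rw [hwell, Set.mem_Ioo]
    constructor <;> linarith
  -- disjointness and inclusion
  have hdisj : Disjoint V' W := by
    rw [Set.disjoint_left]
    rintro q ⟨y, hy, rfl⟩ hq
    rw [hWdef, mem_image_orbSet α β j1 j3 hj1 hj3 _ y] at hq
    have h' : ellF α β j1 j3 y.1 < -c := hy.2.2
    have h'' : -c < ellF α β j1 j3 y.1 := hq.2.2.1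
    linarith
  have hsub : V' ∪ W ⊆ V := by
    apply Set.union_subset
    · refine Set.image_mono fun y hy => ⟨hy.1, hy.2.1, ?_⟩
      have h' : ellF α β j1 j3 y.1 < -c := hy.2.2
      show ellF α β j1 j3 y.1 < 0
      linarith
    · exact Set.image_mono fun y hy => ⟨hy.1, hy.2.1, hy.2.2.2⟩
  -- measure computations
  have hVW : μ (F ⁻¹' V) = μ V := hinv (-1) F hFprop V hVmeas
  rw [hFpre] at hVW
  have hunion : μ (V' ∪ W) = μ V' + μ W := measure_union hdisj hWmeas
  have hmono : μ (V' ∪ W) ≤ μ V := measure_mono hsub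
  have hWpos : 0 < μ W := hpos W hWopen hWne
  have hVfin : μ V ≠ ⊤ := (lt_of_le_of_lt (measure_mono (Set.subset_univ V)) hfin).ne
  rw [hunion, hVW] at hmono
  have hlt : μ V < μ V + μ W := ENNReal.lt_add_right hVfin hWpos.ne'
  exact absurd (lt_of_lt_of_le hlt hmono) (lt_irrefl _)
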